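/- arXiv:2002.02679 — 8 statements merged into one kernel-verified Lean document; each statement's English description precedes it below -/
import Mathlib

section
/- For every real number c with 0 ≤ c < 1, one has c·exp(√(1−c²))/(1 + √(1−c²)) < 1. -/
/-- Key polynomial bound from the cubic Taylor expansion of `exp`. -/
lemma exp_upper_small {x : ℝ} (h0 : 0 ≤ x) (h1 : x ≤ 1) :
    Real.exp x ≤ 1 + x + x ^ 2 / 2 + (2 / 9) * x ^ 3 := by
  have h := Real.exp_bound' h0 h1 (n := 3) (by norm_num)
  simp only [Finset.sum_range_succ, Finset.sum_range_zero] at h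
  norm_num [Nat.factorial] at h
  nlinarith [h]

lemma exp_lower {x : ℝ} (h0 : 0 ≤ x) (h1 : x ≤ 1) :
    1 + x + x ^ 2 / 2 + x ^ 3 / 6 - (5 / 96) * x ^ 4 ≤ Real.exp x := by
  have h := Real.exp_bound (x := x) (by rw [abs_of_nonneg h0]; exact h1) (n := 4) (by norm_num)
  rw [abs_of_nonneg h0] at h
  have h2 := (abs_sub_le_iff.1 h).2
  simp only [Finset.sum_range_succ, Finset.sum_range_zero] at h2
  norm_num [Nat.factorial] at h2
  nlinarith [h2]

lemma key_ineq {s : ℝ} (hs0 : 0 < s) (hs1 : s ≤ 1) :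
    (1 - s) * Real.exp (2 * s) < 1 + s := by
  rcases le_or_gt s (1/2) with hle | hgt
  · have hb := exp_upper_small (x := 2*s) (by linarith) (by linarith)
    nlinarith [hb, Real.exp_pos (2*s), sq_nonneg s, pow_pos hs0 3, pow_pos hs0 4]
  · set t := 1 - s with ht
    have ht0 : 0 ≤ t := by simp [ht]; linarith
    have ht1 : t < 1/2 := by simp [ht]; linarith
    have hlow := exp_lower (x := 2*t) (by linarith) (by linarith)
    have hexp2 : Real.exp 2 < 7.3891 := by
      have h1 := Real.exp_one_lt_d9
      have : Real.exp 2 = Real.exp 1 * Real.exp 1 := by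
        rw [← Real.exp_add]; norm_num
      nlinarith [Real.exp_pos 1]
    have hsplit : Real.exp (2 * s) * Real.exp (2 * t) = Real.exp 2 := by
      rw [← Real.exp_add, ht]; ring_nf
    have hpos : 0 < Real.exp (2 * t) := Real.exp_pos _
    -- goal: t * exp(2s) < 2 - t,  i.e. t * exp 2 < (2-t) * exp(2t)
    have hlow' : 1 + 2*t + 2*t^2 + (4/3)*t^3 - (5/6)*t^4 ≤ Real.exp (2*t) := by
      nlinarith [hlow]
    have hmain : t * Real.exp 2 < (2 - t) * Real.exp (2 * t) := by
      have h2t : (0:ℝ) ≤ 2 - t := by linarith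
      have hP := mul_le_mul_of_nonneg_left hlow' h2t
      have h7 : t * Real.exp 2 ≤ t * 7.3891 := mul_le_mul_of_nonneg_left hexp2.le ht0
      have hh : (0:ℝ) ≤ 1/2 - t := by linarith
      nlinarith [hP, h7, mul_nonneg ht0 ht0, mul_nonneg (mul_nonneg ht0 ht0) ht0,
        mul_nonneg (mul_nonneg (mul_nonneg ht0 ht0) ht0) ht0,
        mul_nonneg hh (mul_nonneg (mul_nonneg ht0 ht0) ht0),
        mul_nonneg hh (mul_nonneg ht0 ht0), mul_nonneg hh ht0,
        mul_nonneg (mul_nonneg (mul_nonneg (mul_nonneg ht0 ht0) ht0) ht0) ht0]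
    have : t * Real.exp (2 * s) * Real.exp (2 * t) < (2 - t) * Real.exp (2 * t) := by
      rw [mul_assoc, hsplit]; exact hmain
    have := (mul_lt_mul_iff_of_pos_right hpos).mp this
    linarith [this]

/-- For every eccentricity `0 ≤ c < 1`, the common ratio
`c·exp(√(1-c²))/(1 + √(1-c²))` is strictly less than `1`. -/
theorem carlini_jacobi_ratio_lt_one (c : ℝ) (hc0 : 0 ≤ c) (hc1 : c < 1) :
    c * Real.exp (Real.sqrt (1 - c ^ 2)) / (1 + Real.sqrt (1 - c ^ 2)) < 1 := by
  set s := Real.sqrt (1 - c ^ 2) with hs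
  have h1c : 0 < 1 - c ^ 2 := by nlinarith
  have hs0 : 0 < s := Real.sqrt_pos.mpr h1c
  have hssq : s ^ 2 = 1 - c ^ 2 := Real.sq_sqrt h1c.le
  have hs1 : s ≤ 1 := by nlinarith
  have hkey := key_ineq hs0 hs1
  have hden : 0 < 1 + s := by linarith
  rw [div_lt_one hden]
  have hexp : Real.exp s ^ 2 = Real.exp (2 * s) := by
    rw [sq, ← Real.exp_add]; ring_nf
  have hsq : (c * Real.exp s) ^ 2 < (1 + s) ^ 2 := by
    have h2 : c ^ 2 = (1 + s) * (1 - s) := by nlinarith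
    calc (c * Real.exp s) ^ 2 = (1 + s) * ((1 - s) * Real.exp (2 * s)) := by
          rw [mul_pow, hexp, h2]; ring
      _ < (1 + s) * (1 + s) := by
          apply mul_lt_mul_of_pos_left hkey hden
      _ = (1 + s) ^ 2 := by ring
  have hnn : 0 ≤ c * Real.exp s := mul_nonneg hc0 (Real.exp_pos s).le
  exact lt_of_pow_lt_pow_left₀ 2 hden.le hsq
end

section
/- The function h : [0,1] → ℝ defined by h(c) = c·exp(√(1−c²))/(1 + √(1−c²)) is strictly monotonically increasing on [0,1], with h(0) = 0 and h(1) = 1. -/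
open Real Set

private noncomputable def carliniF : ℝ → ℝ := fun s => (1 - s) * Real.exp (2 * s) / (1 + s)

private lemma carliniF_hasDerivAt {s : ℝ} (hs : s ≠ -1) :
    HasDerivAt carliniF (-2 * s ^ 2 * Real.exp (2 * s) / (1 + s) ^ 2) s := by
  have h1 : HasDerivAt (fun s : ℝ => (1 - s) * Real.exp (2 * s))
      ((-1) * Real.exp (2 * s) + (1 - s) * (Real.exp (2 * s) * 2)) s := by
    have ha : HasDerivAt (fun s : ℝ => 1 - s) (-1) s := by
      simpa using (hasDerivAt_id' s).const_sub (1:ℝ)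
    have hb : HasDerivAt (fun s : ℝ => Real.exp (2 * s)) (Real.exp (2 * s) * 2) s := by
      have := (Real.hasDerivAt_exp (2 * s)).comp s
        (by simpa using (hasDerivAt_id s).const_mul (2:ℝ))
      exact this
    exact ha.mul hb
  have h2 : HasDerivAt (fun s : ℝ => 1 + s) 1 s := by
    simpa using (hasDerivAt_id' s).const_add (1:ℝ)
  have hne : 1 + s ≠ 0 := by intro h; apply hs; linarith
  have := h1.div h2 hne
  exact this.congr_deriv (by ring)

private lemma carliniF_anti : StrictAntiOn carliniF (Set.Icc (0:ℝ) 1) := by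
  apply strictAntiOn_of_deriv_neg (convex_Icc 0 1)
  · apply ContinuousOn.div
    · exact ((continuous_const.sub continuous_id).mul
        (Real.continuous_exp.comp (continuous_const.mul continuous_id))).continuousOn
    · exact (continuous_const.add continuous_id).continuousOn
    · intro x hx
      have : (0:ℝ) ≤ x := hx.1
      positivity
  · intro x hx
    rw [interior_Icc] at hx
    have hne : x ≠ -1 := by intro h; linarith [hx.1, h.symm ▸ hx.1]
    rw [(carliniF_hasDerivAt hne).deriv]
    have h1 : 0 < x ^ 2 := pow_pos hx.1 2
    have h2 : 0 < Real.exp (2 * x) := Real.exp_pos _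
    have h3 : 0 < (1 + x) ^ 2 := by nlinarith [hx.1]
    have hpos : 0 < 2 * x ^ 2 * Real.exp (2 * x) / (1 + x) ^ 2 :=
      div_pos (by positivity) h3
    have heq : -2 * x ^ 2 * Real.exp (2 * x) / (1 + x) ^ 2
        = -(2 * x ^ 2 * Real.exp (2 * x) / (1 + x) ^ 2) := by ring
    rw [heq]; linarith

private lemma carlini_sq {c : ℝ} (hc : c ∈ Set.Icc (0:ℝ) 1) :
    (c * Real.exp (Real.sqrt (1 - c ^ 2)) / (1 + Real.sqrt (1 - c ^ 2))) ^ 2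
      = carliniF (Real.sqrt (1 - c ^ 2)) := by
  set s := Real.sqrt (1 - c ^ 2) with hs
  have h1 : (0:ℝ) ≤ 1 - c ^ 2 := by nlinarith [hc.1, hc.2]
  have hs2 : s ^ 2 = 1 - c ^ 2 := Real.sq_sqrt h1
  have hsnn : 0 ≤ s := Real.sqrt_nonneg _
  have hne : 1 + s ≠ 0 := by positivity
  have hexp : Real.exp (2 * s) = Real.exp s * Real.exp s := by
    rw [two_mul, Real.exp_add]
  unfold carliniF
  rw [hexp]
  have hc2 : c ^ 2 = (1 - s) * (1 + s) := by nlinarith [hs2]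
  field_simp
  linear_combination hc2

private lemma carlini_s_mem {c : ℝ} (hc : c ∈ Set.Icc (0:ℝ) 1) :
    Real.sqrt (1 - c ^ 2) ∈ Set.Icc (0:ℝ) 1 := by
  constructor
  · exact Real.sqrt_nonneg _
  · exact Real.sqrt_le_one.mpr (by nlinarith [hc.1])

/-- The function `h(c) = c·exp(√(1-c²))/(1 + √(1-c²))` is strictly monotonically
increasing on `[0,1]`, with `h 0 = 0` and `h 1 = 1`. -/
theorem carlini_ratio_strictMonoOn :
    StrictMonoOn
      (fun c : ℝ => c * Real.exp (Real.sqrt (1 - c ^ 2)) / (1 + Real.sqrt (1 - c ^ 2)))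
      (Set.Icc (0 : ℝ) 1) ∧
    (fun c : ℝ => c * Real.exp (Real.sqrt (1 - c ^ 2)) / (1 + Real.sqrt (1 - c ^ 2))) 0 = 0 ∧
    (fun c : ℝ => c * Real.exp (Real.sqrt (1 - c ^ 2)) / (1 + Real.sqrt (1 - c ^ 2))) 1 = 1 := by
  refine ⟨?_, by norm_num, by norm_num⟩
  intro x hx y hy hxy
  simp only
  have hynn : 0 ≤ y * Real.exp (Real.sqrt (1 - y ^ 2)) / (1 + Real.sqrt (1 - y ^ 2)) := by
    have h1 : 0 ≤ y := hy.1
    have h2 : 0 ≤ Real.sqrt (1 - y ^ 2) := Real.sqrt_nonneg _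
    positivity
  apply lt_of_pow_lt_pow_left₀ 2 hynn
  rw [carlini_sq hx, carlini_sq hy]
  apply carliniF_anti (carlini_s_mem hy) (carlini_s_mem hx)
  apply Real.sqrt_lt_sqrt (by nlinarith [hy.2, hy.1])
  nlinarith [hx.1, hy.1]
end

section
/- There exists a unique real number c with 0 < c < 1 such that c·exp(√(1+c²)) = 1 + √(1+c²); moreover this unique root satisfies 0.662 < c < 0.663. -/
open Real Set

noncomputable def lapF (c : ℝ) : ℝ :=
  c * Real.exp (Real.sqrt (1 + c ^ 2)) - (1 + Real.sqrt (1 + c ^ 2))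

lemma lapF_cont : Continuous lapF := by
  unfold lapF
  fun_prop

lemma lapF_deriv_pos {x : ℝ} (hx0 : 0 < x) (hx1 : x < 1) : 0 < deriv lapF x := by
  set s := Real.sqrt (1 + x ^ 2) with hsdef
  have hpos : (0:ℝ) < 1 + x ^ 2 := by positivity
  have hs1 : 1 ≤ s := by
    rw [hsdef]
    nlinarith [Real.sq_sqrt hpos.le, Real.sqrt_nonneg (1 + x ^ 2), sq_nonneg x]
  have hs0 : (0:ℝ) < s := lt_of_lt_of_le one_pos hs1
  have h1 : HasDerivAt (fun c : ℝ => 1 + c ^ 2) (2 * x) x := by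
    simpa using ((hasDerivAt_pow 2 x).const_add 1)
  have h2 : HasDerivAt (fun c : ℝ => Real.sqrt (1 + c ^ 2)) (x / s) x := by
    have h := (Real.hasDerivAt_sqrt (ne_of_gt hpos)).comp x h1
    rw [show x / s = 1 / (2 * Real.sqrt (1 + x ^ 2)) * (2 * x) by
      rw [← hsdef]; field_simp <;> ring]
    exact h
  have h3 : HasDerivAt (fun c : ℝ => Real.exp (Real.sqrt (1 + c ^ 2)))
      (Real.exp s * (x / s)) x := by
    simpa using h2.exp
  have h4 : HasDerivAt lapF
      (1 * Real.exp s + x * (Real.exp s * (x / s)) - (x / s)) x := by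
    have := ((hasDerivAt_id x).mul h3).sub (h2.const_add 1)
    exact this
  rw [h4.deriv]
  have hxs : x < s := lt_of_lt_of_le hx1 hs1
  have hdiv : x / s < 1 := (div_lt_one hs0).2 hxs
  have hexp : s + 1 < Real.exp s := Real.add_one_lt_exp (ne_of_gt hs0)
  have hterm : 0 ≤ x * (Real.exp s * (x / s)) := by positivity
  nlinarith

lemma lapF_mono : StrictMonoOn lapF (Icc 0 1) := by
  apply strictMonoOn_of_deriv_pos (convex_Icc 0 1) lapF_cont.continuousOn
  intro x hx
  rw [interior_Icc] at hx
  exact lapF_deriv_pos hx.1 hx.2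

lemma lapF_662 : lapF 0.662 < 0 := by
  have h1 : (1:ℝ) + (0.662:ℝ) ^ 2 = 1.438244 := by norm_num
  have hshi : Real.sqrt (1 + (0.662:ℝ) ^ 2) < 1.19927 := by
    rw [h1, Real.sqrt_lt' (by norm_num)]; norm_num
  have hslo : (1.19926:ℝ) < Real.sqrt (1 + (0.662:ℝ) ^ 2) := by
    rw [h1, Real.lt_sqrt (by norm_num)]; norm_num
  have he2 : Real.exp (0.19927:ℝ) ≤ 1.2205119 := by
    have h := Real.exp_bound' (x := (0.19927:ℝ)) (by norm_num) (by norm_num)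
      (n := 5) (by norm_num)
    refine h.trans ?_
    norm_num [Finset.sum_range_succ, Nat.factorial]
  have he1 : Real.exp (1:ℝ) < 2.7182818286 := Real.exp_one_lt_d9
  have hkey : Real.exp (Real.sqrt (1 + (0.662:ℝ) ^ 2)) < 2.7182818286 * 1.2205119 := by
    calc Real.exp (Real.sqrt (1 + (0.662:ℝ) ^ 2)) ≤ Real.exp (1.19927 : ℝ) :=
          Real.exp_le_exp.2 hshi.le
      _ = Real.exp 1 * Real.exp (0.19927:ℝ) := by rw [← Real.exp_add]; norm_num
      _ < 2.7182818286 * 1.2205119 := by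
          nlinarith [Real.exp_pos (0.19927:ℝ), Real.exp_pos (1:ℝ), he1, he2]
  unfold lapF
  nlinarith [hkey, hslo]

lemma lapF_663 : 0 < lapF 0.663 := by
  have h1 : (1:ℝ) + (0.663:ℝ) ^ 2 = 1.439569 := by norm_num
  have hshi : Real.sqrt (1 + (0.663:ℝ) ^ 2) < 1.19983 := by
    rw [h1, Real.sqrt_lt' (by norm_num)]; norm_num
  have hslo : (1.19982:ℝ) < Real.sqrt (1 + (0.663:ℝ) ^ 2) := by
    rw [h1, Real.lt_sqrt (by norm_num)]; norm_num
  have he2 : (1.2211:ℝ) ≤ Real.exp (0.19982:ℝ) := by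
    have h := Real.sum_le_exp_of_nonneg (x := (0.19982:ℝ)) (by norm_num) 6
    refine le_trans ?_ h
    norm_num [Finset.sum_range_succ, Nat.factorial]
  have he1 : (2.7182818283:ℝ) < Real.exp 1 := Real.exp_one_gt_d9
  have hkey : (2.7182818283:ℝ) * 1.2211 < Real.exp (Real.sqrt (1 + (0.663:ℝ) ^ 2)) := by
    calc (2.7182818283:ℝ) * 1.2211 < Real.exp 1 * Real.exp (0.19982:ℝ) := by
          nlinarith [Real.exp_pos (0.19982:ℝ), Real.exp_pos (1:ℝ), he1, he2]
      _ = Real.exp (1.19982 : ℝ) := by rw [← Real.exp_add]; norm_num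
      _ ≤ Real.exp (Real.sqrt (1 + (0.663:ℝ) ^ 2)) := Real.exp_le_exp.2 hslo.le
  unfold lapF
  nlinarith [hkey, hshi]

/-- The Laplace (Carlini–Laplace) limit constant: there is a unique `c ∈ (0,1)` with
`c·e^{√(1+c²)} = 1 + √(1+c²)`, and this root lies between `0.662` and `0.663`. -/
theorem laplace_limit_constant :
    (∃! c : ℝ, 0 < c ∧ c < 1 ∧
      c * Real.exp (Real.sqrt (1 + c ^ 2)) = 1 + Real.sqrt (1 + c ^ 2)) ∧
    ∀ c : ℝ, 0 < c → c < 1 →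
      c * Real.exp (Real.sqrt (1 + c ^ 2)) = 1 + Real.sqrt (1 + c ^ 2) →
      0.662 < c ∧ c < 0.663 := by
  have hbounds : ∀ c : ℝ, 0 < c → c < 1 →
      c * Real.exp (Real.sqrt (1 + c ^ 2)) = 1 + Real.sqrt (1 + c ^ 2) →
      0.662 < c ∧ c < 0.663 := by
    intro c hc0 hc1 heq
    have hroot : lapF c = 0 := by unfold lapF; linarith
    have hmem : c ∈ Icc (0:ℝ) 1 := ⟨hc0.le, hc1.le⟩
    constructor
    · by_contra h
      push_neg at h
      have := lapF_mono.monotoneOn hmem (by norm_num : (0.662:ℝ) ∈ Icc (0:ℝ) 1) h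
      have := lapF_662
      linarith
    · by_contra h
      push_neg at h
      have := lapF_mono.monotoneOn (by norm_num : (0.663:ℝ) ∈ Icc (0:ℝ) 1) hmem h
      have := lapF_663
      linarith
  refine ⟨?_, hbounds⟩
  have hsub := intermediate_value_Ioo (by norm_num : (0.662:ℝ) ≤ 0.663)
    lapF_cont.continuousOn
  have hmem : (0:ℝ) ∈ Ioo (lapF 0.662) (lapF 0.663) := ⟨lapF_662, lapF_663⟩
  obtain ⟨c, hcI, hc0⟩ := hsub hmem
  have hc1 : 0 < c := lt_trans (by norm_num) hcI.1
  have hc2 : c < 1 := lt_trans hcI.2 (by norm_num)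
  have heq : c * Real.exp (Real.sqrt (1 + c ^ 2)) = 1 + Real.sqrt (1 + c ^ 2) := by
    have : lapF c = 0 := hc0
    unfold lapF at this
    linarith
  refine ⟨c, ⟨hc1, hc2, heq⟩, ?_⟩
  intro y ⟨hy0, hy1, hyeq⟩
  apply lapF_mono.injOn ⟨hy0.le, hy1.le⟩ ⟨hc1.le, hc2.le⟩
  have h1 : lapF y = 0 := by unfold lapF; linarith
  have h2 : lapF c = 0 := hc0
  rw [h1, h2]
end

section
/- Let p > 0 and m be real numbers, and define s : ℝ → ℝ by s(x) = Σ_{k=0}^∞ (p²m²/4)^k · x^{2k} / (k! · ∏_{j=1}^{k}(p+j)). Then this power series converges for every real x, and for every x ≠ 0 the function s satisfies the differential equation s''(x) + ((2p+1)/x)·s'(x) = p²·m²·s(x). -/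
open Finset

/-- Carlini's series `s(x) = Σ_k (p²m²/4)^k x^{2k} / (k! ∏_{j=1}^k (p+j))`. -/
noncomputable def carliniS (p m : ℝ) (x : ℝ) : ℝ :=
  ∑' k : ℕ, (p ^ 2 * m ^ 2 / 4) ^ k * x ^ (2 * k) /
    ((Nat.factorial k : ℝ) * ∏ j ∈ Finset.range k, (p + (j : ℝ) + 1))

lemma carlini_sumB (t : ℝ) (ht : 0 ≤ t) (k : ℕ) :
    Summable fun n : ℕ => ((n : ℝ) + 1) ^ k * t ^ n / n.factorial := by
  refine Summable.of_nonneg_of_le (fun n => by positivity) (fun n => ?_)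
    (Real.summable_pow_div_factorial ((2:ℝ) ^ k * t))
  have h2 : ((n : ℝ) + 1) ≤ 2 ^ n := by exact_mod_cast (Nat.lt_two_pow_self (n := n))
  have h1 : ((n : ℝ) + 1) ^ k ≤ ((2:ℝ) ^ n) ^ k :=
    pow_le_pow_left₀ (by positivity) h2 k
  have h3 : ((2:ℝ) ^ k * t) ^ n = ((2:ℝ) ^ n) ^ k * t ^ n := by
    rw [mul_pow, ← pow_mul, ← pow_mul, Nat.mul_comm]
  rw [h3]
  gcongr

lemma carlini_summable (d : ℕ → ℝ) (e : ℕ → ℕ) (A B : ℝ) (k : ℕ) (hA : 0 ≤ A)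
    (hd : ∀ n, |d n| ≤ B * ((n : ℝ) + 1) ^ k * A ^ n / n.factorial)
    (he : ∀ n, e n ≤ 2 * n + 2) (x : ℝ) :
    Summable fun n => d n * x ^ e n := by
  set R : ℝ := |x| + 1 with hR
  have hR1 : (1:ℝ) ≤ R := by simp [hR, abs_nonneg]
  have hR0 : (0:ℝ) ≤ R := by linarith
  refine Summable.of_norm_bounded
    (g := fun n : ℕ => (B * R ^ 2) * (((n:ℝ)+1) ^ k * (A * R ^ 2) ^ n / n.factorial))
    (((carlini_sumB (A * R ^ 2) (by positivity) k).mul_left _)) (fun n => ?_)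
  have h1 : ‖d n * x ^ e n‖ = |d n| * |x| ^ e n := by
    rw [Real.norm_eq_abs, abs_mul, abs_pow]
  have h2 : |x| ^ e n ≤ R ^ (2 * n + 2) := by
    calc |x| ^ e n ≤ R ^ e n := by gcongr <;> simp [hR, abs_nonneg]
    _ ≤ R ^ (2 * n + 2) := pow_le_pow_right₀ hR1 (he n)
  have h3 : |d n| * |x| ^ e n ≤ (B * ((n:ℝ)+1) ^ k * A ^ n / (n.factorial : ℝ)) * R ^ (2*n+2) := by
    apply mul_le_mul (hd n) h2 (by positivity)
    exact le_trans (abs_nonneg _) (hd n)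
  rw [h1]
  refine h3.trans (le_of_eq ?_)
  show B * ((n:ℝ)+1) ^ k * A ^ n / (n.factorial : ℝ) * R ^ (2*n+2)
      = (B * R ^ 2) * (((n:ℝ)+1) ^ k * (A * R ^ 2) ^ n / (n.factorial : ℝ))
  rw [mul_pow, ← pow_mul]
  ring

set_option maxHeartbeats 1000000 in
lemma carlini_hasDerivAt (d : ℕ → ℝ) (e : ℕ → ℕ) (A B : ℝ) (k : ℕ) (hA : 0 ≤ A)
    (hd : ∀ n, |d n| ≤ B * ((n : ℝ) + 1) ^ k * A ^ n / n.factorial)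
    (he : ∀ n, e n ≤ 2 * n + 2) (x : ℝ) :
    HasDerivAt (fun y => ∑' n, d n * y ^ e n)
      (∑' n, d n * ((e n : ℝ) * x ^ (e n - 1))) x := by
  set R : ℝ := |x| + 1 with hR
  have hR1 : (1:ℝ) ≤ R := by simp [hR, abs_nonneg]
  have hR0 : (0:ℝ) ≤ R := by linarith
  have hxmem : x ∈ Metric.ball (0:ℝ) R := by
    simp only [Metric.mem_ball, Real.dist_eq, sub_zero, hR]
    linarith
  refine hasDerivAt_tsum_of_isPreconnected
    (u := fun n : ℕ => (2 * B * R ^ 2) * (((n:ℝ)+1) ^ (k+1) * (A * R ^ 2) ^ n / (n.factorial : ℝ)))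
    (g := fun n y => d n * y ^ e n)
    (g' := fun n y => d n * ((e n : ℝ) * y ^ (e n - 1)))
    (((carlini_sumB (A * R ^ 2) (by positivity) (k+1)).mul_left _))
    Metric.isOpen_ball (convex_ball 0 R).isPreconnected
    (fun n y _ => ?_) (fun n y hy => ?_) hxmem
    (carlini_summable d e A B k hA hd he x) hxmem
  · simpa [mul_assoc] using (hasDerivAt_pow (e n) y).const_mul (d n)
  · have hyR : |y| ≤ R := by
      rw [Metric.mem_ball, Real.dist_eq, sub_zero] at hy
      exact hy.le
    have h1 : ‖d n * ((e n : ℝ) * y ^ (e n - 1))‖ = |d n| * (e n : ℝ) * |y| ^ (e n - 1) := by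
      rw [Real.norm_eq_abs, abs_mul, abs_mul, abs_pow, Nat.abs_cast, mul_assoc]
    have h2 : |y| ^ (e n - 1) ≤ R ^ (2 * n + 2) := by
      calc |y| ^ (e n - 1) ≤ R ^ (e n - 1) := by gcongr <;> simp [abs_nonneg]
      _ ≤ R ^ (2 * n + 2) := pow_le_pow_right₀ hR1 (by have := he n; omega)
    have h3 : (e n : ℝ) ≤ 2 * ((n:ℝ) + 1) := by
      have h := (Nat.cast_le (α := ℝ)).mpr (he n)
      push_cast at h
      linarith
    rw [h1]
    calc |d n| * (e n : ℝ) * |y| ^ (e n - 1)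
        ≤ ((B * ((n:ℝ)+1) ^ k * A ^ n / (n.factorial : ℝ)) * (2 * ((n:ℝ)+1))) * R ^ (2*n+2) := by
          have hb : |d n| * (e n : ℝ)
              ≤ (B * ((n:ℝ)+1) ^ k * A ^ n / (n.factorial : ℝ)) * (2 * ((n:ℝ)+1)) :=
            mul_le_mul (hd n) h3 (Nat.cast_nonneg _) (le_trans (abs_nonneg _) (hd n))
          exact mul_le_mul hb h2 (by positivity) (le_trans (by positivity) hb)
      _ = (2 * B * R ^ 2) * (((n:ℝ)+1) ^ (k+1) * (A * R ^ 2) ^ n / (n.factorial : ℝ)) := by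
          rw [mul_pow, ← pow_mul]
          ring

noncomputable def carliniC (p m : ℝ) (n : ℕ) : ℝ :=
  (p ^ 2 * m ^ 2 / 4) ^ n / ((n.factorial : ℝ) * ∏ j ∈ Finset.range n, (p + (j : ℝ) + 1))

lemma carliniP_pos (p : ℝ) (hp : 0 < p) (n : ℕ) :
    (1:ℝ) ≤ ∏ j ∈ Finset.range n, (p + (j : ℝ) + 1) := by
  induction n with
  | zero => simp
  | succ n ih =>
    rw [Finset.prod_range_succ]
    nlinarith [(Nat.cast_nonneg n : (0:ℝ) ≤ n)]

lemma carliniC_bound (p m : ℝ) (hp : 0 < p) (n : ℕ) :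
    |carliniC p m n| ≤ 1 * ((n : ℝ) + 1) ^ 0 * |p ^ 2 * m ^ 2 / 4| ^ n / n.factorial := by
  have hP := carliniP_pos p hp n
  have hf : (0:ℝ) < n.factorial := by exact_mod_cast n.factorial_pos
  have hPpos : (0:ℝ) < ∏ j ∈ Finset.range n, (p + (j : ℝ) + 1) := by linarith
  have hden : |((n.factorial : ℝ)) * ∏ j ∈ Finset.range n, (p + (j : ℝ) + 1)|
      = (n.factorial : ℝ) * ∏ j ∈ Finset.range n, (p + (j : ℝ) + 1) :=
    abs_of_pos (by positivity)
  rw [carliniC, abs_div, abs_pow, hden]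
  simp only [pow_zero, one_mul, mul_one]
  rw [div_le_div_iff₀ (by positivity) hf]
  have h0 : (0:ℝ) ≤ |p ^ 2 * m ^ 2 / 4| ^ n := by positivity
  nlinarith [mul_nonneg (mul_nonneg h0 hf.le) (sub_nonneg.mpr hP)]

lemma carliniC_rec (p m : ℝ) (hp : 0 < p) (n : ℕ) :
    carliniC p m (n + 1) * (((n:ℝ) + 1) * (p + (n:ℝ) + 1)) =
      (p ^ 2 * m ^ 2 / 4) * carliniC p m n := by
  have hP := carliniP_pos p hp n
  have hPne : (∏ j ∈ Finset.range n, (p + (j : ℝ) + 1)) ≠ 0 := by linarith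
  have hf : ((n.factorial : ℝ)) ≠ 0 := by exact_mod_cast n.factorial_ne_zero
  have hp1 : p + (n:ℝ) + 1 ≠ 0 := by positivity
  have hn1 : ((n:ℝ) + 1) ≠ 0 := by positivity
  rw [carliniC, carliniC, Finset.prod_range_succ, Nat.factorial_succ]
  push_cast
  field_simp
  ring

/-- The series defining `s` converges for every real `x`, and for `x ≠ 0` its sum
satisfies the singular differential equation `s'' + ((2p+1)/x)·s' = p²m²·s`. -/
theorem carlini_series_ode (p m : ℝ) (hp : 0 < p) :
    (∀ x : ℝ, Summable (fun k : ℕ =>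
      (p ^ 2 * m ^ 2 / 4) ^ k * x ^ (2 * k) /
        ((Nat.factorial k : ℝ) * ∏ j ∈ Finset.range k, (p + (j : ℝ) + 1)))) ∧
    ∀ x : ℝ, x ≠ 0 →
      deriv (deriv (carliniS p m)) x + ((2 * p + 1) / x) * deriv (carliniS p m) x =
        p ^ 2 * m ^ 2 * carliniS p m x := by
  set A : ℝ := |p ^ 2 * m ^ 2 / 4| with hAdef
  have hA : 0 ≤ A := abs_nonneg _
  set c : ℕ → ℝ := carliniC p m with hcdef
  set d1 : ℕ → ℝ := fun n => c n * ((2 * n : ℕ) : ℝ) with hd1def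
  have hc : ∀ n, |c n| ≤ 1 * ((n : ℝ) + 1) ^ 0 * A ^ n / n.factorial :=
    fun n => carliniC_bound p m hp n
  have hd1 : ∀ n, |d1 n| ≤ 2 * ((n : ℝ) + 1) ^ 1 * A ^ n / n.factorial := by
    intro n
    have h1 : ((2 * n : ℕ) : ℝ) ≤ 2 * ((n:ℝ) + 1) := by push_cast; linarith
    have h2 := hc n
    simp only [pow_zero, one_mul, mul_one] at h2
    rw [hd1def, abs_mul, Nat.abs_cast]
    calc |c n| * ((2 * n : ℕ) : ℝ) ≤ (A ^ n / n.factorial) * (2 * ((n:ℝ) + 1)) :=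
          mul_le_mul h2 h1 (Nat.cast_nonneg _) (le_trans (abs_nonneg _) h2)
      _ = 2 * ((n : ℝ) + 1) ^ 1 * A ^ n / n.factorial := by ring
  have hd2 : ∀ n, |d1 n * ((2 * n - 1 : ℕ) : ℝ)| ≤ 4 * ((n : ℝ) + 1) ^ 2 * A ^ n / n.factorial := by
    intro n
    have h1 : ((2 * n - 1 : ℕ) : ℝ) ≤ 2 * ((n:ℝ) + 1) := by
      have : ((2 * n - 1 : ℕ) : ℝ) ≤ ((2 * n : ℕ) : ℝ) := by exact_mod_cast Nat.sub_le _ _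
      push_cast at this ⊢
      linarith
    rw [abs_mul, Nat.abs_cast]
    calc |d1 n| * ((2 * n - 1 : ℕ) : ℝ)
        ≤ (2 * ((n : ℝ) + 1) ^ 1 * A ^ n / n.factorial) * (2 * ((n:ℝ) + 1)) :=
          mul_le_mul (hd1 n) h1 (Nat.cast_nonneg _) (le_trans (abs_nonneg _) (hd1 n))
      _ = 4 * ((n : ℝ) + 1) ^ 2 * A ^ n / n.factorial := by ring
  have hSeq : carliniS p m = fun y => ∑' n, c n * y ^ (2 * n) := by
    funext y
    exact tsum_congr fun n => by rw [hcdef, carliniC]; ring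
  have hsum0 : ∀ x : ℝ, Summable fun n => c n * x ^ (2 * n) :=
    fun x => carlini_summable c (fun n => 2 * n) A 1 0 hA hc (fun n => show 2*n ≤ 2*n+2 by omega) x
  constructor
  · intro x
    refine (summable_congr fun n => ?_).mp (hsum0 x)
    rw [hcdef, carliniC]; ring
  intro x hx
  -- first derivative
  have H1 : ∀ y : ℝ, HasDerivAt (carliniS p m)
      (∑' n, d1 n * y ^ (2 * n - 1)) y := by
    intro y
    rw [hSeq]
    have := carlini_hasDerivAt c (fun n => 2 * n) A 1 0 hA hc (fun n => show 2*n ≤ 2*n+2 by omega) y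
    refine this.congr_deriv (tsum_congr fun n => ?_)
    rw [hd1def]; ring
  have hD1 : deriv (carliniS p m) = fun y => ∑' n, d1 n * y ^ (2 * n - 1) :=
    funext fun y => (H1 y).deriv
  have H2 : HasDerivAt (fun y => ∑' n, d1 n * y ^ (2 * n - 1))
      (∑' n, d1 n * (((2 * n - 1 : ℕ) : ℝ) * x ^ (2 * n - 1 - 1))) x :=
    carlini_hasDerivAt d1 (fun n => 2 * n - 1) A 2 1 hA hd1 (fun n => show 2*n-1 ≤ 2*n+2 by omega) x
  rw [hD1]
  rw [H2.deriv]
  -- summability of the pieces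
  have hsum2 : Summable fun n => d1 n * (((2 * n - 1 : ℕ) : ℝ) * x ^ (2 * n - 1 - 1)) := by
    refine (summable_congr fun n => ?_).mp
      (carlini_summable (fun n => d1 n * ((2 * n - 1 : ℕ) : ℝ)) (fun n => 2 * n - 1 - 1)
        A 4 2 hA hd2 (fun n => show 2*n-1-1 ≤ 2*n+2 by omega) x)
    ring
  have hsum1 : Summable fun n => d1 n * x ^ (2 * n - 1) :=
    carlini_summable d1 (fun n => 2 * n - 1) A 2 1 hA hd1 (fun n => show 2*n-1 ≤ 2*n+2 by omega) x
  have hsum1' : Summable fun n => (2 * p + 1) / x * (d1 n * x ^ (2 * n - 1)) :=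
    hsum1.mul_left _
  rw [hSeq]
  rw [← tsum_mul_left, ← tsum_mul_left, ← Summable.tsum_add hsum2 hsum1']
  have hw0 : d1 0 * (((2 * 0 - 1 : ℕ) : ℝ) * x ^ (2 * 0 - 1 - 1)) +
      (2 * p + 1) / x * (d1 0 * x ^ (2 * 0 - 1)) = 0 := by
    simp [hd1def]
  rw [Summable.tsum_eq_zero_add (hsum2.add hsum1')]
  rw [hw0, zero_add]
  refine tsum_congr fun n => ?_
  have E1 : 2 * (n + 1) - 1 = 2 * n + 1 := by omega
  have E2 : 2 * (n + 1) - 1 - 1 = 2 * n := by omega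
  have hr := carliniC_rec p m hp n
  simp only [hd1def, E1, E2]
  have h2n2 : ((2 * (n + 1) : ℕ) : ℝ) = 2 * (n:ℝ) + 2 := by push_cast; ring
  have h2n1 : ((2 * n + 1 : ℕ) : ℝ) = 2 * (n:ℝ) + 1 := by push_cast; ring
  rw [h2n2, h2n1, pow_succ]
  rw [Nat.add_sub_cancel]
  field_simp
  linear_combination 4 * hr
end

section
/- Let a > 0 and ν > −1/2 be real numbers, and define y : ℝ → ℝ by y(x) = ∫_0^a (a² − t²)^{ν−1/2}·cos(x·t) dt. Then y is twice differentiable and satisfies x·y''(x) + (2ν+1)·y'(x) + a²·x·y(x) = 0 for every real x. -/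
open MeasureTheory intervalIntegral Set Metric

/-- Euler's definite-integral solution (as corrected by Jacobi):
`y(x) = ∫_0^a (a² - t²)^{ν-1/2}·cos(x·t) dt` is twice differentiable and satisfies
`x·y'' + (2ν+1)·y' + a²·x·y = 0`. -/
theorem euler_integral_solution (a ν : ℝ) (ha : 0 < a) (hν : -(1 / 2 : ℝ) < ν)
    (y : ℝ → ℝ)
    (hy : y = fun x : ℝ => ∫ t in (0 : ℝ)..a, (a ^ 2 - t ^ 2) ^ (ν - 1 / 2 : ℝ) * Real.cos (x * t)) :
    (∀ x : ℝ, DifferentiableAt ℝ y x ∧ DifferentiableAt ℝ (deriv y) x) ∧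
    ∀ x : ℝ, x * deriv (deriv y) x + (2 * ν + 1) * deriv y x + a ^ 2 * x * y x = 0 := by
  set p : ℝ := ν - 1/2 with hpdef
  set q : ℝ := ν + 1/2 with hqdef
  have hp : (-1 : ℝ) < p := by simp only [hpdef]; linarith
  have hq : (0 : ℝ) < q := by simp only [hqdef]; linarith
  set f : ℝ → ℝ := fun t => (a ^ 2 - t ^ 2) ^ p with hfdef
  -- integrability of f
  have hfint : IntervalIntegrable f volume 0 a := by
    have h1 : IntervalIntegrable (fun t : ℝ => (a - t) ^ p) volume 0 a := by
      have := (intervalIntegrable_rpow' (a := 0) (b := a) hp).comp_sub_left a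
      simpa using this.symm
    have h2 : ContinuousOn (fun t : ℝ => (a + t) ^ p) (uIcc 0 a) := by
      apply ContinuousOn.rpow_const (by fun_prop)
      intro t ht
      rw [uIcc_of_le ha.le] at ht
      exact Or.inl (by nlinarith [ht.1])
    refine (h1.mul_continuousOn h2).congr ?_
    intro t ht
    rw [uIoc_of_le ha.le] at ht
    beta_reduce
    rw [← Real.mul_rpow (by linarith [ht.1, ht.2]) (by linarith [ht.1])]
    ring_nf
    rfl
  have hfmeas : Measurable f := by
    simp only [hfdef]; fun_prop
  have hprod : ∀ g : ℝ → ℝ, Continuous g →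
      IntervalIntegrable (fun t => f t * g t) volume 0 a := fun g hg =>
    hfint.mul_continuousOn hg.continuousOn
  have hf0 : ∀ t ∈ uIoc (0:ℝ) a, 0 ≤ f t := by
    intro t ht
    rw [uIoc_of_le ha.le] at ht
    exact Real.rpow_nonneg (by nlinarith [ht.1, ht.2]) p
  -- first derivative
  have hD1 : ∀ x : ℝ, HasDerivAt y
      (∫ t in (0:ℝ)..a, f t * (-(t * Real.sin (x * t)))) x := by
    intro x₀
    rw [hy]
    have := intervalIntegral.hasDerivAt_integral_of_dominated_loc_of_deriv_le
      (F := fun x t => f t * Real.cos (x * t))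
      (F' := fun x t => f t * (-(t * Real.sin (x * t))))
      (bound := fun t => f t * a) (μ := volume) (a := 0) (b := a) (x₀ := x₀)
      (s := ball x₀ 1) (ball_mem_nhds x₀ one_pos)
      (Filter.Eventually.of_forall fun x =>
        (hfmeas.mul (by fun_prop : Measurable fun t => Real.cos (x * t))).aestronglyMeasurable)
      (hprod _ (by fun_prop))
      ((hfmeas.mul (by fun_prop : Measurable fun t =>
        -(t * Real.sin (x₀ * t)))).aestronglyMeasurable)
      (ae_of_all _ ?_) (hprod _ continuous_const) (ae_of_all _ ?_)
    · exact this.2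
    · intro t ht x hx
      rw [uIoc_of_le ha.le] at ht
      have h1 : |(-(t * Real.sin (x * t)))| ≤ a := by
        rw [abs_neg, abs_mul]
        calc |t| * |Real.sin (x * t)| ≤ a * 1 := by
              apply mul_le_mul _ (Real.abs_sin_le_one _) (abs_nonneg _) ha.le
              rw [abs_of_pos ht.1]; exact ht.2
          _ = a := mul_one a
      have := hf0 t (by rw [uIoc_of_le ha.le]; exact ht)
      rw [Real.norm_eq_abs, abs_mul, abs_of_nonneg this]
      exact mul_le_mul_of_nonneg_left h1 this
    · intro t _ x _
      have h1 : HasDerivAt (fun x : ℝ => x * t) t x := hasDerivAt_mul_const t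
      have h2 : HasDerivAt (fun x : ℝ => Real.cos (x * t))
          (-Real.sin (x * t) * t) x := h1.cos
      have := h2.const_mul (f t)
      refine this.congr_deriv ?_
      ring
  -- second derivative
  have hD2 : ∀ x : ℝ, HasDerivAt (fun x' => ∫ t in (0:ℝ)..a, f t * (-(t * Real.sin (x' * t))))
      (∫ t in (0:ℝ)..a, f t * (-(t ^ 2 * Real.cos (x * t)))) x := by
    intro x₀
    have := intervalIntegral.hasDerivAt_integral_of_dominated_loc_of_deriv_le
      (F := fun x t => f t * (-(t * Real.sin (x * t))))
      (F' := fun x t => f t * (-(t ^ 2 * Real.cos (x * t))))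
      (bound := fun t => f t * a ^ 2) (μ := volume) (a := 0) (b := a) (x₀ := x₀)
      (s := ball x₀ 1) (ball_mem_nhds x₀ one_pos)
      (Filter.Eventually.of_forall fun x =>
        (hfmeas.mul (by fun_prop : Measurable fun t => -(t * Real.sin (x * t)))).aestronglyMeasurable)
      (hprod _ (by fun_prop))
      ((hfmeas.mul (by fun_prop : Measurable fun t =>
        -(t ^ 2 * Real.cos (x₀ * t)))).aestronglyMeasurable)
      (ae_of_all _ ?_) (hprod _ continuous_const) (ae_of_all _ ?_)
    · exact this.2
    · intro t ht x hx
      rw [uIoc_of_le ha.le] at ht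
      have h1 : |(-(t ^ 2 * Real.cos (x * t)))| ≤ a ^ 2 := by
        rw [abs_neg, abs_mul]
        calc |t ^ 2| * |Real.cos (x * t)| ≤ a ^ 2 * 1 := by
              apply mul_le_mul _ (Real.abs_cos_le_one _) (abs_nonneg _) (by positivity)
              rw [abs_of_pos (pow_pos ht.1 2)]
              nlinarith [ht.1, ht.2]
          _ = a ^ 2 := mul_one _
      have := hf0 t (by rw [uIoc_of_le ha.le]; exact ht)
      rw [Real.norm_eq_abs, abs_mul, abs_of_nonneg this]
      exact mul_le_mul_of_nonneg_left h1 this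
    · intro t _ x _
      have h1 : HasDerivAt (fun x : ℝ => x * t) t x := hasDerivAt_mul_const t
      have h2 : HasDerivAt (fun x : ℝ => Real.sin (x * t))
          (Real.cos (x * t) * t) x := h1.sin
      have := ((h2.const_mul t).neg).const_mul (f t)
      refine this.congr_deriv ?_
      ring
  have hderiv1 : deriv y = fun x' => ∫ t in (0:ℝ)..a, f t * (-(t * Real.sin (x' * t))) :=
    funext fun x' => (hD1 x').deriv
  have hderiv2 : deriv (deriv y)
      = fun x' => ∫ t in (0:ℝ)..a, f t * (-(t ^ 2 * Real.cos (x' * t))) := by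
    rw [hderiv1]; exact funext fun x' => (hD2 x').deriv
  constructor
  · intro x
    refine ⟨(hD1 x).differentiableAt, ?_⟩
    rw [hderiv1]; exact (hD2 x).differentiableAt
  intro x
  rw [hderiv2, hderiv1, hy]
  -- integrability of the three integrands
  have hA := hprod (fun t => -(t ^ 2 * Real.cos (x * t))) (by fun_prop)
  have hB := hprod (fun t => -(t * Real.sin (x * t))) (by fun_prop)
  have hC := hprod (fun t => Real.cos (x * t)) (by fun_prop)
  have hcont1 : Continuous (fun t : ℝ => (a ^ 2 - t ^ 2) ^ q) :=
    Continuous.rpow_const (by fun_prop) (fun t => Or.inr hq.le)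
  -- combine into one integral
  rw [← intervalIntegral.integral_const_mul, ← intervalIntegral.integral_const_mul,
    ← intervalIntegral.integral_const_mul,
    ← intervalIntegral.integral_add (hA.const_mul x) (hB.const_mul (2 * ν + 1)),
    ← intervalIntegral.integral_add ((hA.const_mul x).add (hB.const_mul (2 * ν + 1)))
      (hC.const_mul (a ^ 2 * x))]
  -- the combined integrand is the derivative of h t = (a²-t²)^q * sin (x t)
  set D : ℝ → ℝ := fun t => x * ((a ^ 2 - t ^ 2) ^ q * Real.cos (x * t))
      + (2 * ν + 1) * (f t * (-(t * Real.sin (x * t)))) with hDdef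
  have key : ∀ t ∈ Icc (0:ℝ) a, f t * (a ^ 2 - t ^ 2) = (a ^ 2 - t ^ 2) ^ q := by
    intro t ht
    rcases eq_or_lt_of_le ht.2 with h | h
    · subst h
      simp [hfdef, Real.zero_rpow hq.ne']
    · have hb : 0 < a ^ 2 - t ^ 2 := by nlinarith [ht.1]
      have hq1 : q = p + 1 := by simp only [hpdef, hqdef]; ring
      rw [hq1, Real.rpow_add_one hb.ne' p]
  have hcongr : EqOn
      (fun t => x * (f t * (-(t ^ 2 * Real.cos (x * t))))
        + (2 * ν + 1) * (f t * (-(t * Real.sin (x * t))))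
        + a ^ 2 * x * (f t * Real.cos (x * t))) D (uIcc 0 a) := by
    intro t ht
    rw [uIcc_of_le ha.le] at ht
    have k := key t ht
    simp only [hDdef]
    linear_combination (x * Real.cos (x * t)) * k
  rw [intervalIntegral.integral_congr hcongr]
  -- FTC
  have hval : ∫ t in (0:ℝ)..a, D t
      = (fun t => (a ^ 2 - t ^ 2) ^ q * Real.sin (x * t)) a
        - (fun t => (a ^ 2 - t ^ 2) ^ q * Real.sin (x * t)) 0 := by
    apply intervalIntegral.integral_eq_sub_of_hasDeriv_right_of_le
      (f := fun t => (a ^ 2 - t ^ 2) ^ q * Real.sin (x * t)) (f' := D) ha.le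
    · exact (hcont1.mul (by fun_prop)).continuousOn
    · intro t ht
      have hb : 0 < a ^ 2 - t ^ 2 := by nlinarith [ht.1, ht.2]
      have hu : HasDerivAt (fun t : ℝ => a ^ 2 - t ^ 2) (-(2 * t)) t := by
        simpa using (hasDerivAt_pow 2 t).const_sub (a ^ 2)
      have hv := hu.rpow_const (p := q) (Or.inl hb.ne')
      have hs : HasDerivAt (fun t : ℝ => Real.sin (x * t)) (Real.cos (x * t) * x) t := by
        simpa using ((hasDerivAt_id t).const_mul x).sin
      have hq1 : q - 1 = p := by simp only [hpdef, hqdef]; ring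
      have := hv.mul hs
      rw [hq1] at this
      refine HasDerivAt.hasDerivWithinAt ?_
      refine HasDerivAt.congr_deriv this ?_
      simp only [hDdef, hfdef, hqdef]
      ring
    · exact ((hcont1.mul (by fun_prop : Continuous fun t => Real.cos (x * t))).intervalIntegrable
        0 a).const_mul x |>.add (hB.const_mul (2 * ν + 1))
  rw [hval]
  simp [Real.zero_rpow hq.ne']
end

section
/- Let c ∈ [0,1) and let θ : ℝ → ℝ assign to each u the unique real solution of θ(u) − c·sin θ(u) = u. Then for every integer n ≥ 1, ∫_0^π (θ(u) − u)·sin(n·u) du = (1/n)·∫_0^π cos(n·t − n·c·sin t) dt. -/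
open Real intervalIntegral

/-- Bessel's formula for the Fourier sine coefficients of the solution of Kepler's
equation: `∫_0^π (θ(u) - u)·sin(nu) du = (1/n)·∫_0^π cos(nt - nc·sin t) dt`. -/
theorem bessel_fourier_coefficient (c : ℝ) (hc0 : 0 ≤ c) (hc1 : c < 1)
    (θ : ℝ → ℝ) (hθ : ∀ u : ℝ, θ u - c * Real.sin (θ u) = u) :
    ∀ n : ℕ, 1 ≤ n →
      ∫ u in (0 : ℝ)..Real.pi, (θ u - u) * Real.sin (n * u) =
        (1 / n) * ∫ t in (0 : ℝ)..Real.pi, Real.cos (n * t - n * c * Real.sin t) := by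
  intro n hn
  have hnpos : (0 : ℝ) < n := by
    have : (1 : ℝ) ≤ n := by exact_mod_cast hn
    linarith
  have hn0 : (n : ℝ) ≠ 0 := ne_of_gt hnpos
  set g : ℝ → ℝ := fun t => t - c * Real.sin t with hg_def
  have hgθ : ∀ u, g (θ u) = u := hθ
  have hgd : ∀ t : ℝ, HasDerivAt g (1 - c * Real.cos t) t := by
    intro t
    exact (hasDerivAt_id t).sub ((Real.hasDerivAt_sin t).const_mul c)
  have hmono : StrictMono g := by
    apply strictMono_of_hasDerivAt_pos hgd
    intro t
    have h1 : c * Real.cos t ≤ c * 1 := by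
      apply mul_le_mul_of_nonneg_left (Real.cos_le_one t) hc0
    linarith
  have hinj : Function.Injective g := hmono.injective
  have hθg : ∀ t, θ (g t) = t := fun t => hinj (hgθ (g t))
  have hsurj : Function.Surjective g := fun u => ⟨θ u, hθ u⟩
  -- continuity of θ
  have hθcont : Continuous θ := by
    let e : ℝ ≃o ℝ := StrictMono.orderIsoOfSurjective g hmono hsurj
    have hθe : θ = ⇑e.symm := by
      funext u
      apply hinj
      rw [hgθ]
      exact (e.apply_symm_apply u).symm
    rw [hθe]
    exact OrderIso.continuous e.symm
  -- substitution u = g t in LHS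
  have hfcont : Continuous (fun u => (θ u - u) * Real.sin ((n : ℝ) * u)) := by
    exact (hθcont.sub continuous_id).mul (Real.continuous_sin.comp (continuous_const.mul continuous_id))
  have hsub : ∫ t in (0:ℝ)..Real.pi, (1 - c * Real.cos t) • ((θ (g t) - g t) * Real.sin ((n:ℝ) * g t))
      = ∫ u in (g 0)..(g Real.pi), (θ u - u) * Real.sin ((n:ℝ) * u) := by
    apply intervalIntegral.integral_comp_smul_deriv (fun t _ => hgd t) ?_ hfcont
    exact (continuous_const.sub (continuous_const.mul Real.continuous_cos)).continuousOn
  have hg0 : g 0 = 0 := by simp [hg_def]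
  have hgpi : g Real.pi = Real.pi := by simp [hg_def]
  rw [hg0, hgpi] at hsub
  -- rewrite integrand using θ (g t) = t
  have hLHS : ∫ u in (0:ℝ)..Real.pi, (θ u - u) * Real.sin ((n:ℝ) * u)
      = ∫ t in (0:ℝ)..Real.pi, (1 - c * Real.cos t) * (c * Real.sin t * Real.sin ((n:ℝ) * g t)) := by
    rw [← hsub]
    apply intervalIntegral.integral_congr
    intro t _
    simp only [smul_eq_mul, hθg t]
    simp only [hg_def]
    ring
  -- rewrite RHS
  have hRHS : (1 / (n:ℝ)) * ∫ t in (0:ℝ)..Real.pi, Real.cos ((n:ℝ) * t - (n:ℝ) * c * Real.sin t)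
      = ∫ t in (0:ℝ)..Real.pi, (1 / (n:ℝ)) * Real.cos ((n:ℝ) * g t) := by
    rw [← intervalIntegral.integral_const_mul]
    apply intervalIntegral.integral_congr
    intro t _
    simp only [hg_def]
    ring_nf
  -- the key identity via FTC
  set F : ℝ → ℝ := fun t => -(1 / (n:ℝ)) * (c * Real.sin t * Real.cos ((n:ℝ) * g t))
      - (1 / (n:ℝ)^2) * Real.sin ((n:ℝ) * g t) with hF_def
  have hFd : ∀ t : ℝ, HasDerivAt F
      ((1 - c * Real.cos t) * (c * Real.sin t * Real.sin ((n:ℝ) * g t))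
        - (1 / (n:ℝ)) * Real.cos ((n:ℝ) * g t)) t := by
    intro t
    have hng : HasDerivAt (fun t => (n:ℝ) * g t) ((n:ℝ) * (1 - c * Real.cos t)) t :=
      (hgd t).const_mul _
    have hcos : HasDerivAt (fun t => Real.cos ((n:ℝ) * g t))
        (-Real.sin ((n:ℝ) * g t) * ((n:ℝ) * (1 - c * Real.cos t))) t :=
      (Real.hasDerivAt_cos _).comp t hng
    have hsin : HasDerivAt (fun t => Real.sin ((n:ℝ) * g t))
        (Real.cos ((n:ℝ) * g t) * ((n:ℝ) * (1 - c * Real.cos t))) t :=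
      (Real.hasDerivAt_sin _).comp t hng
    have hcs : HasDerivAt (fun t => c * Real.sin t) (c * Real.cos t) t :=
      (Real.hasDerivAt_sin t).const_mul c
    have h1 : HasDerivAt (fun t => c * Real.sin t * Real.cos ((n:ℝ) * g t))
        (c * Real.cos t * Real.cos ((n:ℝ) * g t)
          + c * Real.sin t * (-Real.sin ((n:ℝ) * g t) * ((n:ℝ) * (1 - c * Real.cos t)))) t :=
      hcs.mul hcos
    have h2 := (h1.const_mul (-(1 / (n:ℝ)))).sub (hsin.const_mul (1 / (n:ℝ)^2))
    refine h2.congr_deriv ?_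
    have hinv : (n:ℝ) * (1 / (n:ℝ)^2) = 1 / n := by
      rw [one_div, one_div, pow_two, mul_inv, ← mul_assoc, mul_inv_cancel₀ hn0, one_mul]
    have hk := congrArg (fun x : ℝ => x * (Real.cos ((n:ℝ) * g t) * (1 - c * Real.cos t))) hinv
    have hk2 := congrArg (fun x : ℝ => x * (c * Real.sin t * Real.sin ((n:ℝ) * g t) * (1 - c * Real.cos t)))
      (mul_one_div_cancel hn0)
    linear_combination (-1 : ℝ) * hk + hk2
  have hcontA : Continuous fun t => (1 - c * Real.cos t) * (c * Real.sin t * Real.sin ((n:ℝ) * g t))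
      - (1 / (n:ℝ)) * Real.cos ((n:ℝ) * g t) := by
    have hgc : Continuous g := continuous_id.sub (continuous_const.mul Real.continuous_sin)
    fun_prop
  have hftc : ∫ t in (0:ℝ)..Real.pi,
      ((1 - c * Real.cos t) * (c * Real.sin t * Real.sin ((n:ℝ) * g t))
        - (1 / (n:ℝ)) * Real.cos ((n:ℝ) * g t)) = F Real.pi - F 0 := by
    exact intervalIntegral.integral_eq_sub_of_hasDerivAt (fun t _ => hFd t)
      (hcontA.intervalIntegrable _ _)
  have hF0 : F 0 = 0 := by simp [hF_def, hg0]
  have hFpi : F Real.pi = 0 := by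
    simp only [hF_def, hgpi, Real.sin_pi, mul_zero, zero_mul, neg_mul]
    rw [Real.sin_nat_mul_pi]
    ring
  rw [hFpi, hF0, sub_zero] at hftc
  have hcontB : Continuous fun t => (1 / (n:ℝ)) * Real.cos ((n:ℝ) * g t) := by
    have hgc : Continuous g := continuous_id.sub (continuous_const.mul Real.continuous_sin)
    fun_prop
  have hcontC : Continuous fun t => (1 - c * Real.cos t) * (c * Real.sin t * Real.sin ((n:ℝ) * g t)) := by
    have hgc : Continuous g := continuous_id.sub (continuous_const.mul Real.continuous_sin)
    fun_prop
  rw [intervalIntegral.integral_sub (hcontC.intervalIntegrable _ _)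
    (hcontB.intervalIntegrable _ _)] at hftc
  rw [hLHS, hRHS]
  linarith
end

section
/- The integral ∫_0^1 x^x dx equals the sum of the convergent series Σ_{n=1}^∞ (−1)^{n+1}/n^n, i.e. 1/1¹ − 1/2² + 1/3³ − 1/4⁴ + ···. -/
open MeasureTheory Real Set

/-- The interval `(0,1)` as the image of `(0,∞)` under `t ↦ exp (-t)`. -/
lemma ioo_eq_image : Set.Ioo (0:ℝ) 1 = (fun t : ℝ => Real.exp (-t)) '' Set.Ioi 0 := by
  ext x
  constructor
  · rintro ⟨hx0, hx1⟩
    refine ⟨-Real.log x, ?_, by simp [Real.exp_log hx0]⟩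
    simpa using Real.log_neg hx0 hx1
  · rintro ⟨t, ht, rfl⟩
    exact ⟨Real.exp_pos _, Real.exp_lt_one_iff.mpr (neg_lt_zero.mpr ht)⟩

/-- Key termwise integral: `∫₀¹ xⁿ (log x)ⁿ dx = (-1)ⁿ n! / (n+1)^(n+1)`. -/
lemma key_integral (n : ℕ) :
    ∫ x in Set.Ioo (0:ℝ) 1, x ^ n * Real.log x ^ n =
      (-1 : ℝ) ^ n * (n.factorial : ℝ) / ((n : ℝ) + 1) ^ (n + 1) := by
  have hderiv : ∀ t ∈ Set.Ioi (0:ℝ),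
      HasDerivWithinAt (fun t : ℝ => Real.exp (-t)) (-Real.exp (-t)) (Set.Ioi 0) t := by
    intro t _
    have h := (Real.hasDerivAt_exp (-t)).comp t (hasDerivAt_neg t)
    simpa [mul_comm, Function.comp_def] using h.hasDerivWithinAt
  have hinj : Set.InjOn (fun t : ℝ => Real.exp (-t)) (Set.Ioi 0) := fun a _ b _ h => by
    have := Real.exp_injective h
    linarith
  rw [ioo_eq_image, integral_image_eq_integral_abs_deriv_smul measurableSet_Ioi hderiv hinj]
  have hcongr : ∀ t ∈ Set.Ioi (0:ℝ),
      |(-Real.exp (-t))| • (Real.exp (-t) ^ n * Real.log (Real.exp (-t)) ^ n) =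
        (-1 : ℝ) ^ n * (t ^ (((n : ℝ) + 1) - 1) * Real.exp (-(((n : ℝ) + 1) * t))) := by
    intro t _
    have habs : |(-Real.exp (-t))| = Real.exp (-t) := by
      rw [abs_neg, abs_of_pos (Real.exp_pos _)]
    rw [smul_eq_mul, habs, Real.log_exp]
    have h1 : ((n : ℝ) + 1) - 1 = (n : ℝ) := by ring
    rw [h1, Real.rpow_natCast]
    rw [neg_pow, ← Real.exp_nat_mul]
    rw [show -(((n : ℝ) + 1) * t) = -t + (n : ℝ) * -t by ring, Real.exp_add]
    ring
  rw [setIntegral_congr_fun measurableSet_Ioi hcongr, integral_const_mul,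
    Real.integral_rpow_mul_exp_neg_mul_Ioi (by positivity : (0:ℝ) < (n : ℝ) + 1)
      (by positivity : (0:ℝ) < (n : ℝ) + 1)]
  rw [Real.Gamma_nat_eq_factorial]
  rw [one_div, show ((n:ℝ)+1) = ((n+1:ℕ):ℝ) by push_cast; ring, Real.rpow_natCast,
    inv_pow]
  push_cast
  field_simp

/-- Pointwise bound on `(0,1)`: `|x log x| ≤ 1`. -/
lemma abs_mul_log_le (x : ℝ) (hx : x ∈ Set.Ioo (0:ℝ) 1) : |x * Real.log x| ≤ 1 := by
  obtain ⟨h0, h1⟩ := hx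
  have hlog : Real.log x < 0 := Real.log_neg h0 h1
  rw [abs_of_nonpos (mul_nonpos_of_nonneg_of_nonpos h0.le hlog.le)]
  have h2 : Real.log x⁻¹ ≤ x⁻¹ - 1 := Real.log_le_sub_one_of_pos (by positivity)
  rw [Real.log_inv] at h2
  nlinarith [mul_le_mul_of_nonneg_left h2 h0.le, mul_inv_cancel₀ h0.ne']

lemma F_integrable (n : ℕ) :
    MeasureTheory.IntegrableOn
      (fun x : ℝ => x ^ n * Real.log x ^ n / (n.factorial : ℝ)) (Set.Ioo 0 1) := by
  apply MeasureTheory.Measure.integrableOn_of_bounded (M := 1)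
  · simp [Real.volume_Ioo]
  · exact (((measurable_id.pow_const n).mul
      (Real.measurable_log.pow_const n)).div_const _).aestronglyMeasurable
  · filter_upwards [MeasureTheory.ae_restrict_mem measurableSet_Ioo] with x hx
    have h1 : |x * Real.log x| ≤ 1 := abs_mul_log_le x hx
    have hfac : (1:ℝ) ≤ (n.factorial : ℝ) := by exact_mod_cast n.factorial_pos
    rw [Real.norm_eq_abs, abs_div, ← mul_pow, abs_pow, abs_of_pos (by positivity : (0:ℝ) < (n.factorial:ℝ))]
    have hp : |x * Real.log x| ^ n ≤ 1 := by
      calc |x * Real.log x| ^ n ≤ 1 ^ n := pow_le_pow_left₀ (abs_nonneg _) h1 n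
        _ = 1 := one_pow n
    exact div_le_one_of_le₀ (hp.trans hfac) (by positivity)

lemma F_norm_integral (n : ℕ) :
    ∫ x in Set.Ioo (0:ℝ) 1, ‖x ^ n * Real.log x ^ n / (n.factorial : ℝ)‖ =
      1 / ((n : ℝ) + 1) ^ (n + 1) := by
  have hfacpos : (0:ℝ) < (n.factorial : ℝ) := by exact_mod_cast n.factorial_pos
  have hcongr : ∀ x ∈ Set.Ioo (0:ℝ) 1,
      ‖x ^ n * Real.log x ^ n / (n.factorial : ℝ)‖ =
        (-1:ℝ) ^ n * (x ^ n * Real.log x ^ n / (n.factorial : ℝ)) := by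
    intro x hx
    obtain ⟨h0, h1⟩ := hx
    have hlog : Real.log x ≤ 0 := (Real.log_neg h0 h1).le
    rw [Real.norm_eq_abs, abs_div, abs_of_pos hfacpos, ← mul_pow, abs_pow,
      abs_of_nonpos (mul_nonpos_of_nonneg_of_nonpos h0.le hlog)]
    rw [show -(x * Real.log x) = (-1) * (x * Real.log x) by ring, mul_pow, mul_pow]
    ring
  rw [MeasureTheory.setIntegral_congr_fun measurableSet_Ioo hcongr,
    MeasureTheory.integral_const_mul, MeasureTheory.integral_div, key_integral]
  have hpow : ((n:ℝ) + 1) ^ (n + 1) ≠ 0 := by positivity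
  have hneg : (-1:ℝ) ^ n * (-1:ℝ) ^ n = 1 := by
    rw [← mul_pow]; norm_num
  field_simp
  linear_combination hneg

lemma F_integral (n : ℕ) :
    ∫ x in Set.Ioo (0:ℝ) 1, x ^ n * Real.log x ^ n / (n.factorial : ℝ) =
      (-1:ℝ) ^ n / ((n : ℝ) + 1) ^ (n + 1) := by
  have hfacpos : (0:ℝ) < (n.factorial : ℝ) := by exact_mod_cast n.factorial_pos
  rw [MeasureTheory.integral_div, key_integral]
  rw [div_div, mul_comm (((n:ℝ)+1)^(n+1)) (n.factorial:ℝ), ← div_div]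
  rw [mul_div_assoc, div_self hfacpos.ne', mul_one]

lemma summable_aux : Summable (fun n : ℕ => 1 / ((n : ℝ) + 1) ^ (n + 1)) := by
  apply Summable.of_nonneg_of_le (fun n => by positivity)
    (f := fun n : ℕ => (1/2 : ℝ) ^ n)
  · intro n
    have h2 : (2:ℝ) ^ n ≤ ((n:ℝ) + 1) ^ (n + 1) := by
      cases n with
      | zero => norm_num
      | succ m =>
        push_cast
        have hm : (0:ℝ) ≤ (m:ℝ) := m.cast_nonneg
        calc (2:ℝ) ^ (m + 1) ≤ ((m:ℝ) + 1 + 1) ^ (m + 1) :=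
              pow_le_pow_left₀ (by norm_num) (by linarith) _
          _ ≤ ((m:ℝ) + 1 + 1) ^ (m + 1 + 1) :=
              pow_le_pow_right₀ (by linarith) (by omega)
    rw [div_pow, one_pow]
    exact one_div_le_one_div_of_le (by positivity) h2
  · exact summable_geometric_of_lt_one (by norm_num) (by norm_num)

set_option maxHeartbeats 1000000 in
/-- Johann Bernoulli's series: `∫_0^1 x^x dx = 1/1¹ - 1/2² + 1/3³ - 1/4⁴ + ⋯`. -/
theorem bernoulli_xx_integral :
    HasSum (fun n : ℕ => (-1 : ℝ) ^ n / ((n : ℝ) + 1) ^ (n + 1))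
      (∫ x in (0 : ℝ)..1, x ^ (x : ℝ)) := by
  have hint : ∀ n : ℕ, MeasureTheory.Integrable
      (fun x : ℝ => x ^ n * Real.log x ^ n / (n.factorial : ℝ))
      (MeasureTheory.volume.restrict (Set.Ioo 0 1)) := fun n => F_integrable n
  have hs : Summable fun n : ℕ => ∫ x, ‖x ^ n * Real.log x ^ n / (n.factorial : ℝ)‖
      ∂(MeasureTheory.volume.restrict (Set.Ioo (0:ℝ) 1)) := by
    simpa only [F_norm_integral] using summable_aux
  have hsum := MeasureTheory.hasSum_integral_of_summable_integral_norm hint hs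
  have h1 : (fun n : ℕ => ∫ x in Set.Ioo (0:ℝ) 1,
      x ^ n * Real.log x ^ n / (n.factorial : ℝ)) =
      fun n : ℕ => (-1 : ℝ) ^ n / ((n : ℝ) + 1) ^ (n + 1) := funext fun n => F_integral n
  have h2 : ∫ x in Set.Ioo (0:ℝ) 1,
      (∑' n : ℕ, x ^ n * Real.log x ^ n / (n.factorial : ℝ)) =
      ∫ x in (0 : ℝ)..1, x ^ (x : ℝ) := by
    rw [intervalIntegral.integral_of_le (by norm_num : (0:ℝ) ≤ 1),
      MeasureTheory.integral_Ioc_eq_integral_Ioo]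
    apply MeasureTheory.setIntegral_congr_fun measurableSet_Ioo
    intro x hx
    obtain ⟨h0, _⟩ := hx
    have : ∀ n : ℕ, x ^ n * Real.log x ^ n / (n.factorial : ℝ) =
        (x * Real.log x) ^ n / (n.factorial : ℝ) := fun n => by rw [mul_pow]
    dsimp only
    rw [tsum_congr this]
    rw [Real.rpow_def_of_pos h0, Real.exp_eq_exp_ℝ, NormedSpace.exp_eq_tsum_div]
    simp [mul_comm]
  rw [h1, h2] at hsum
  exact hsum
end

section
/- Let α be a real number with 0 < α < π, and define the complex number x = e^{−α·cos α/sin α}·(cos α + i·sin α). Then x is not real, and x·Log(x) (with Log the principal complex logarithm) equals the negative real number −(α/sin α)·e^{−α·cos α/sin α}. In particular, for z := −(α/sin α)·e^{−α·cos α/sin α} < 0, the equation w·Log(w) = z has a nonreal complex solution. -/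
/-- Carlini's complex roots of `x·log x = z` for negative `z`: for `0 < α < π` the
number `x = e^{-α·cos α/sin α}(cos α + i·sin α)` is not real and satisfies
`x·Log x = -(α/sin α)·e^{-α·cos α/sin α} < 0`; in particular `w·Log w = z` has a
nonreal solution for this negative real `z`. -/
theorem carlini_complex_roots (α : ℝ) (h0 : 0 < α) (hπ : α < Real.pi) :
    (((Real.exp (-(α * Real.cos α / Real.sin α)) : ℝ) : ℂ) *
        ((Real.cos α : ℂ) + Complex.I * (Real.sin α : ℂ))).im ≠ 0 ∧
    (-(α / Real.sin α) * Real.exp (-(α * Real.cos α / Real.sin α)) < 0) ∧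
    (((Real.exp (-(α * Real.cos α / Real.sin α)) : ℝ) : ℂ) *
        ((Real.cos α : ℂ) + Complex.I * (Real.sin α : ℂ))) *
      Complex.log
        (((Real.exp (-(α * Real.cos α / Real.sin α)) : ℝ) : ℂ) *
          ((Real.cos α : ℂ) + Complex.I * (Real.sin α : ℂ))) =
      ((-(α / Real.sin α) * Real.exp (-(α * Real.cos α / Real.sin α)) : ℝ) : ℂ) ∧
    ∃ w : ℂ, w.im ≠ 0 ∧
      w * Complex.log w =
        ((-(α / Real.sin α) * Real.exp (-(α * Real.cos α / Real.sin α)) : ℝ) : ℂ) := by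
  have hs : 0 < Real.sin α := Real.sin_pos_of_pos_of_lt_pi h0 hπ
  have hsne : Real.sin α ≠ 0 := ne_of_gt hs
  set t : ℝ := -(α * Real.cos α / Real.sin α) with ht
  set x : ℂ := ((Real.exp t : ℝ) : ℂ) * ((Real.cos α : ℂ) + Complex.I * (Real.sin α : ℂ))
    with hx
  have him : x.im = Real.exp t * Real.sin α := by
    simp [hx, Complex.mul_im, Complex.add_im, Complex.mul_re, Complex.exp_ofReal_re, Complex.sin_ofReal_re]
  have himne : x.im ≠ 0 := by
    rw [him]
    positivity
  have hneg : -(α / Real.sin α) * Real.exp t < 0 := by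
    have : 0 < α / Real.sin α := div_pos h0 hs
    nlinarith [Real.exp_pos t]
  have hxe : x = Complex.exp ((t : ℂ) + (α : ℂ) * Complex.I) := by
    rw [Complex.exp_add, Complex.exp_mul_I]
    simp [hx, Complex.ofReal_exp, ← Complex.ofReal_cos, ← Complex.ofReal_sin]
    ring
  have hlog : Complex.log x = (t : ℂ) + (α : ℂ) * Complex.I := by
    rw [hxe, Complex.log_exp]
    · simp
      linarith [Real.pi_pos]
    · simp
      linarith
  refine ⟨himne, hneg, ?_, x, himne, ?_⟩ <;>
  · rw [hlog, hxe]
    rw [Complex.exp_add, Complex.exp_mul_I]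
    have hc : Complex.cos (α : ℂ) = (Real.cos α : ℂ) := (Complex.ofReal_cos α).symm
    have hsin : Complex.sin (α : ℂ) = (Real.sin α : ℂ) := (Complex.ofReal_sin α).symm
    have hpy : (Real.cos α : ℂ) ^ 2 + (Real.sin α : ℂ) ^ 2 = 1 := by
      norm_cast
      exact Real.cos_sq_add_sin_sq α
    have hsc : ((Real.sin α : ℝ) : ℂ) ≠ 0 := by exact_mod_cast hsne
    rw [hc, hsin, ht]
    push_cast
    field_simp
    have hpy2 : Complex.cos (α:ℂ) ^ 2 + Complex.sin (α:ℂ) ^ 2 = 1 :=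
      Complex.cos_sq_add_sin_sq _
    have hsc2 : Complex.sin (α:ℂ) ≠ 0 := by rw [hsin]; exact hsc
    field_simp
    set E := Complex.exp (-(↑α * Complex.cos ↑α) / Complex.sin ↑α)
    linear_combination ((α:ℂ)) * Complex.sin (α:ℂ) ^ 2 * Complex.I_sq -
      ((α:ℂ)) * hpy2
end
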